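/- Let R be a commutative domain, σ a ring endomorphism of R, and M an R-module. Then the Nagata extension R⊕_σM is a right McCoy ring. -/

import Mathlib

/-- The Nagata extension `R ⊕_σ M` of a commutative ring `R` by an `R`-module `M` along a
ring endomorphism `σ` of `R`: the underlying additive group is `R × M`, with multiplication
`(a, m) * (b, n) = (a * b, σ a • n + b • m)`. -/
@[nolint unusedArguments]
def Nagata (R : Type*) [CommRing R] (σ : R →+* R) (M : Type*)
    [AddCommGroup M] [Module R M] : Type _ := R × M

namespace Nagata

variable {R : Type*} [CommRing R] {σ : R →+* R} {M : Type*} [AddCommGroup M] [Module R M]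

instance : AddCommGroup (Nagata R σ M) := inferInstanceAs (AddCommGroup (R × M))

/-- The element `(a, m)` of the Nagata extension. -/
def mk (a : R) (m : M) : Nagata R σ M := (a, m)

instance : Ring (Nagata R σ M) where
  __ := (inferInstance : AddCommGroup (Nagata R σ M))
  mul x y := (x.1 * y.1, σ x.1 • y.2 + y.1 • x.2)
  one := ((1 : R), (0 : M))
  left_distrib x y z := by
    refine Prod.ext ?_ ?_
    · show x.1 * (y.1 + z.1) = x.1 * y.1 + x.1 * z.1; ring
    · show σ x.1 • (y.2 + z.2) + (y.1 + z.1) • x.2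
          = (σ x.1 • y.2 + y.1 • x.2) + (σ x.1 • z.2 + z.1 • x.2)
      rw [smul_add, add_smul]; abel
  right_distrib x y z := by
    refine Prod.ext ?_ ?_
    · show (x.1 + y.1) * z.1 = x.1 * z.1 + y.1 * z.1; ring
    · show σ (x.1 + y.1) • z.2 + z.1 • (x.2 + y.2)
          = (σ x.1 • z.2 + z.1 • x.2) + (σ y.1 • z.2 + z.1 • y.2)
      rw [map_add, add_smul, smul_add]; abel
  zero_mul x := by
    refine Prod.ext ?_ ?_
    · show (0 : R) * x.1 = 0; ring
    · show σ (0 : R) • x.2 + x.1 • (0 : M) = 0; simp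
  mul_zero x := by
    refine Prod.ext ?_ ?_
    · show x.1 * (0 : R) = 0; ring
    · show σ x.1 • (0 : M) + (0 : R) • x.2 = 0; simp
  mul_assoc x y z := by
    refine Prod.ext ?_ ?_
    · show x.1 * y.1 * z.1 = x.1 * (y.1 * z.1); ring
    · show σ (x.1 * y.1) • z.2 + z.1 • (σ x.1 • y.2 + y.1 • x.2)
          = σ x.1 • (σ y.1 • z.2 + z.1 • y.2) + (y.1 * z.1) • x.2
      rw [map_mul, mul_smul, smul_add, smul_add, mul_smul, smul_comm z.1 (σ x.1),
        smul_comm z.1 y.1]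
      abel
  one_mul x := by
    refine Prod.ext ?_ ?_
    · show 1 * x.1 = x.1; ring
    · show σ 1 • x.2 + x.1 • (0 : M) = x.2; simp
  mul_one x := by
    refine Prod.ext ?_ ?_
    · show x.1 * 1 = x.1; ring
    · show σ x.1 • (0 : M) + (1 : R) • x.2 = x.2; simp

end Nagata

/-- A ring `S` is right McCoy if whenever nonzero polynomials `f, g` over it satisfy
`f * g = 0`, there is a nonzero constant `c` with `f * C c = 0`. -/
def IsRightMcCoyRing (S : Type*) [Ring S] : Prop :=
  ∀ f g : Polynomial S, f ≠ 0 → g ≠ 0 → f * g = 0 →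
    ∃ c : S, c ≠ 0 ∧ f * Polynomial.C c = 0

namespace Nagata

open Polynomial

variable {R : Type*} [CommRing R] {σ : R →+* R} {M : Type*} [AddCommGroup M] [Module R M]

lemma mul_def' (x y : Nagata R σ M) :
    x * y = (x.1 * y.1, σ x.1 • y.2 + y.1 • x.2) := rfl

lemma one_def' : (1 : Nagata R σ M) = ((1 : R), (0 : M)) := rfl

lemma zero_def' : (0 : Nagata R σ M) = ((0 : R), (0 : M)) := rfl

/-- First projection as a ring homomorphism. -/
def fstHom : Nagata R σ M →+* R where
  toFun x := x.1
  map_one' := rfl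
  map_mul' _ _ := rfl
  map_zero' := rfl
  map_add' _ _ := rfl

/-- The endomorphism `(a, m) ↦ (σ a, 0)` of the Nagata extension. -/
def eHom : Nagata R σ M →+* Nagata R σ M where
  toFun x := ((σ x.1 : R), (0 : M))
  map_one' := by
    refine Prod.ext ?_ ?_
    · show σ 1 = 1; simp
    · rfl
  map_mul' x y := by
    refine Prod.ext ?_ ?_
    · show σ (x.1 * y.1) = σ x.1 * σ y.1; simp
    · show (0 : M) = σ (σ x.1) • (0 : M) + σ y.1 • (0 : M); simp
  map_zero' := by
    refine Prod.ext ?_ ?_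
    · show σ 0 = 0; simp
    · rfl
  map_add' x y := by
    refine Prod.ext ?_ ?_
    · show σ (x.1 + y.1) = σ x.1 + σ y.1; simp
    · show (0 : M) = 0 + 0; simp

lemma mul_eq_swap {x y : Nagata R σ M} (hy : y.1 = 0) : x * y = y * eHom x := by
  refine Prod.ext ?_ ?_
  · show x.1 * y.1 = y.1 * σ x.1
    rw [hy]; ring
  · show σ x.1 • y.2 + y.1 • x.2 = σ y.1 • (0 : M) + σ x.1 • y.2
    rw [hy]; simp

lemma comm_of_snd_eq_zero {x y : Nagata R σ M} (hx : x.2 = 0) (hy : y.2 = 0) :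
    x * y = y * x := by
  refine Prod.ext ?_ ?_
  · show x.1 * y.1 = y.1 * x.1; ring
  · show σ x.1 • y.2 + y.1 • x.2 = σ y.1 • x.2 + x.1 • y.2
    rw [hx, hy]; simp

lemma poly_mul_swap {f g : Polynomial (Nagata R σ M)} (hg : ∀ j, (g.coeff j).1 = 0) :
    f * g = g * f.map eHom := by
  ext k
  rw [Polynomial.coeff_mul, Polynomial.coeff_mul]
  conv_lhs => rw [← Finset.HasAntidiagonal.map_swap_antidiagonal, Finset.sum_map]
  refine Finset.sum_congr rfl fun ij _ => ?_
  simp only [Function.Embedding.coeFn_mk, Prod.fst_swap, Prod.snd_swap, Polynomial.coeff_map]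
  exact mul_eq_swap (hg ij.1)

/-- Key McCoy-style induction: if every coefficient of `h` has zero second component,
`g` is a nonzero polynomial all of whose coefficients have zero first component, and
`g * h = 0`, then some nonzero constant with zero first component left-annihilates `h`. -/
lemma key (h : Polynomial (Nagata R σ M)) (hh : ∀ j, (h.coeff j).2 = 0) :
    ∀ (n : ℕ) (g : Polynomial (Nagata R σ M)), g.natDegree ≤ n → g ≠ 0 →
      (∀ j, (g.coeff j).1 = 0) → g * h = 0 →
      ∃ c : Nagata R σ M, c ≠ 0 ∧ c.1 = 0 ∧ Polynomial.C c * h = 0 := by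
  classical
  intro n
  induction n using Nat.strong_induction_on with
  | _ n ih =>
    intro g hdeg hg0 hgfst hgh
    by_cases hall : ∀ j, g * Polynomial.C (h.coeff j) = 0
    · obtain ⟨j₀, hj₀⟩ : ∃ j₀, g.coeff j₀ ≠ 0 := by
        by_contra hcon
        push_neg at hcon
        exact hg0 (Polynomial.ext fun k => hcon k)
      refine ⟨g.coeff j₀, hj₀, hgfst j₀, ?_⟩
      ext k
      rw [Polynomial.coeff_C_mul]
      have := hall k
      have h2 : (g * Polynomial.C (h.coeff k)).coeff j₀ = 0 := by rw [this]; simp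
      rwa [Polynomial.coeff_mul_C] at h2
    · push_neg at hall
      obtain ⟨j₁, hj₁⟩ := hall
      set P : ℕ → Prop := fun j => g * Polynomial.C (h.coeff j) ≠ 0 with hP
      have hj₁le : j₁ ≤ h.natDegree := by
        by_contra hcon
        push_neg at hcon
        rw [Polynomial.coeff_eq_zero_of_natDegree_lt hcon] at hj₁
        simp at hj₁
      set J := Nat.findGreatest P h.natDegree with hJ
      have hPJ : P J := Nat.findGreatest_spec hj₁le hj₁
      have hgt : ∀ j, J < j → g * Polynomial.C (h.coeff j) = 0 := by
        intro j hj
        by_cases hjb : j ≤ h.natDegree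
        · by_contra hcon
          exact Nat.findGreatest_is_greatest hj hjb hcon
        · push_neg at hjb
          rw [Polynomial.coeff_eq_zero_of_natDegree_lt hjb]
          simp
      -- each coefficient beyond J kills g pointwise
      have hgt' : ∀ j, J < j → ∀ i, g.coeff i * h.coeff j = 0 := by
        intro j hj i
        have := hgt j hj
        have h2 : (g * Polynomial.C (h.coeff j)).coeff i = 0 := by rw [this]; simp
        rwa [Polynomial.coeff_mul_C] at h2
      set D := g.natDegree with hD
      -- the leading coefficient of g kills h.coeff J
      have hlead : g.coeff D * h.coeff J = 0 := by
        have hco : (g * h).coeff (D + J) = 0 := by rw [hgh]; simp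
        rw [Polynomial.coeff_mul] at hco
        rw [Finset.sum_eq_single (D, J)] at hco
        · exact hco
        · rintro ⟨i, j⟩ hmem hne
          rw [Finset.HasAntidiagonal.mem_antidiagonal] at hmem
          rcases lt_trichotomy i D with hi | hi | hi
          · have : J < j := by omega
            exact hgt' j this i
          · have : j = J := by omega
            exact absurd (by rw [hi, this]) hne
          · rw [Polynomial.coeff_eq_zero_of_natDegree_lt hi]
            simp
        · intro hmem
          simp [Finset.HasAntidiagonal.mem_antidiagonal] at hmem
      set g' := g * Polynomial.C (h.coeff J) with hg'
      have hg'ne : g' ≠ 0 := hPJ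
      have hg'coeff : ∀ i, g'.coeff i = g.coeff i * h.coeff J := fun i =>
        Polynomial.coeff_mul_C _ _ _
      have hg'deg : g'.natDegree < D := by
        by_contra hcon
        push_neg at hcon
        have hne : g'.coeff g'.natDegree ≠ 0 :=
          Polynomial.leadingCoeff_ne_zero.2 hg'ne
        rcases eq_or_lt_of_le hcon with heq | hlt
        · rw [hg'coeff, ← heq, hlead] at hne
          exact hne rfl
        · rw [hg'coeff, Polynomial.coeff_eq_zero_of_natDegree_lt hlt] at hne
          simp at hne
      have hDpos : 0 < D := lt_of_le_of_lt (Nat.zero_le _) hg'deg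
      -- g' * h = 0 using commutativity of "scalar" elements
      have hComm : Polynomial.C (h.coeff J) * h = h * Polynomial.C (h.coeff J) := by
        ext k
        rw [Polynomial.coeff_C_mul, Polynomial.coeff_mul_C]
        exact comm_of_snd_eq_zero (hh J) (hh k)
      have hg'h : g' * h = 0 := by
        rw [hg', mul_assoc, hComm, ← mul_assoc, hgh, zero_mul]
      have hg'fst : ∀ j, (g'.coeff j).1 = 0 := by
        intro j
        rw [hg'coeff]
        show (g.coeff j).1 * (h.coeff J).1 = 0
        rw [hgfst j, zero_mul]
      exact ih (D - 1) (by omega) g' (by omega) hg'ne hg'fst hg'h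

lemma mul_eq_zero_of_fst {x y : Nagata R σ M} (hx : x.1 = 0) (hy : y.1 = 0) :
    x * y = 0 := by
  refine Prod.ext ?_ ?_
  · show x.1 * y.1 = 0
    rw [hx]; ring
  · show σ x.1 • y.2 + y.1 • x.2 = 0
    rw [hx, hy]; simp

end Nagata

/-- If `R` is a commutative domain and `M` any `R`-module, then the Nagata extension
`R ⊕_σ M` is a right McCoy ring. -/
theorem nagata_rightMcCoy_of_isDomain
    (R : Type*) [CommRing R] [IsDomain R] (σ : R →+* R)
    (M : Type*) [AddCommGroup M] [Module R M] :
    IsRightMcCoyRing (Nagata R σ M) := by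
  classical
  intro f g hf hg hfg
  have hmap : (f.map (Nagata.fstHom)) * (g.map (Nagata.fstHom)) = 0 := by
    rw [← Polynomial.map_mul, hfg, Polynomial.map_zero]
  rcases mul_eq_zero.1 hmap with hF | hG
  · -- all coefficients of f have zero first component
    have hffst : ∀ i, ((f.coeff i).1 : R) = 0 := by
      intro i
      have := congrArg (fun p => Polynomial.coeff p i) hF
      simp [Polynomial.coeff_map] at this; exact this
    obtain ⟨i₀, hi₀⟩ : ∃ i, f.coeff i ≠ 0 := by
      by_contra hcon
      push_neg at hcon
      exact hf (Polynomial.ext fun k => hcon k)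
    refine ⟨f.coeff i₀, hi₀, ?_⟩
    ext k
    rw [Polynomial.coeff_mul_C, Nagata.mul_eq_zero_of_fst (hffst k) (hffst i₀)]
    simp
  · have hgfst : ∀ j, ((g.coeff j).1 : R) = 0 := by
      intro j
      have := congrArg (fun p => Polynomial.coeff p j) hG
      simp [Polynomial.coeff_map] at this; exact this
    have hgh : g * (f.map Nagata.eHom) = 0 := by
      rw [← Nagata.poly_mul_swap hgfst, hfg]
    have hh : ∀ j, (((f.map Nagata.eHom).coeff j).2 : M) = 0 := by
      intro j
      rw [Polynomial.coeff_map]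
      rfl
    obtain ⟨c, hc0, hcfst, hch⟩ :=
      Nagata.key (f.map Nagata.eHom) hh g.natDegree g le_rfl hg hgfst hgh
    refine ⟨c, hc0, ?_⟩
    ext k
    have h2 : (Polynomial.C c * f.map Nagata.eHom).coeff k = 0 := by rw [hch]; simp
    rw [Polynomial.coeff_C_mul, Polynomial.coeff_map] at h2
    rw [Polynomial.coeff_mul_C, Nagata.mul_eq_swap hcfst, h2]
    simp
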